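/- Comprehension Theorem for the graph model: let A be a nonempty set and let t be a combinatory term built from variables x₁, …, xₙ and constants (each constant being a fixed subset of G(A)) by the binary application operation. Then there exists a subset M of G(A) such that for all subsets X₁, …, Xₙ of G(A), ((M·X₁)·X₂)···Xₙ equals the value of t obtained by interpreting each variable xᵢ as Xᵢ, each constant as its fixed subset of G(A), and term application as the application operation of the graph model. -/

import Mathlib

universe u

/-- The graph model `G(A)`: the least set containing the atoms `A` and closed under
forming pairs `α → a` where `α` is a finite (possibly empty) collection of elements
of `G(A)` (encoded as a list) and `a ∈ G(A)`. -/
inductive G (A : Type u) : Type u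
  | atom : A → G A
  | arrow : List (G A) → G A → G A

/-- The application operation of the graph model:
`M · N = {x : ∃ α, (α → x) ∈ M ∧ α ⊆ N}`. -/
def ap {A : Type u} (M N : Set (G A)) : Set (G A) :=
  {x | ∃ α : List (G A), G.arrow α x ∈ M ∧ ∀ b ∈ α, b ∈ N}

/-- Combinatory terms over variables `x₁, …, xₙ` and constants from `C`:
every variable is a term, every constant is a term, and terms are closed
under binary application. -/
inductive Term (n : ℕ) (C : Type*) : Type _
  | var : Fin n → Term n C
  | const : C → Term n C
  | app : Term n C → Term n C → Term n C

/-- The value of a combinatory term in the graph model, given an interpretation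
`ι` of the constants as subsets of `G(A)` and an assignment `ρ` of subsets of
`G(A)` to the variables; application is interpreted by the application
operation of the graph model. -/
def Term.value {A : Type u} {n : ℕ} {C : Type*} (ι : C → Set (G A)) :
    Term n C → (Fin n → Set (G A)) → Set (G A)
  | .var i, ρ => ρ i
  | .const c, _ => ι c
  | .app t s, ρ => ap (t.value ι ρ) (s.value ι ρ)

/-- Iterated application `((M·X₁)·X₂)···Xₙ`. -/
def iterAp {A : Type u} {n : ℕ} (M : Set (G A)) (X : Fin n → Set (G A)) : Set (G A) :=
  (List.ofFn X).foldl ap M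

namespace Scratch
variable {A : Type u}

def lset (α : List (G A)) : Set (G A) := {b | b ∈ α}

def Cont {n : ℕ} (F : (Fin n → Set (G A)) → Set (G A)) : Prop :=
  ∀ ρ x, x ∈ F ρ ↔ ∃ αs : Fin n → List (G A),
    (∀ i, ∀ b ∈ αs i, b ∈ ρ i) ∧ x ∈ F (fun i => lset (αs i))

lemma Cont.mono {n : ℕ} {F : (Fin n → Set (G A)) → Set (G A)} (h : Cont F)
    {ρ σ : Fin n → Set (G A)} (hle : ∀ i, ρ i ⊆ σ i) : F ρ ⊆ F σ := by
  intro x hx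
  obtain ⟨αs, hαs, hx⟩ := (h ρ x).1 hx
  exact (h σ x).2 ⟨αs, fun i b hb => hle i (hαs i b hb), hx⟩

lemma cont_var {n : ℕ} (i : Fin n) : Cont (A := A) (fun ρ => ρ i) := by
  intro ρ x
  constructor
  · intro hx
    refine ⟨fun j => if j = i then [x] else [], fun j b hb => ?_, ?_⟩
    · by_cases hji : j = i
      · simp [hji] at hb; subst hb; subst hji; exact hx
      · simp [hji] at hb
    · simp [lset]
  · rintro ⟨αs, hα, hx⟩
    exact hα i x hx

lemma cont_const {n : ℕ} (c : Set (G A)) : Cont (A := A) (fun _ : Fin n → Set (G A) => c) := by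
  intro ρ x
  constructor
  · intro hx; exact ⟨fun _ => [], by simp, hx⟩
  · rintro ⟨_, _, hx⟩; exact hx

lemma approx_list {n : ℕ} {G' : (Fin n → Set (G A)) → Set (G A)} (h : Cont G')
    (ρ : Fin n → Set (G A)) (β : List (G A)) (hβ : ∀ b ∈ β, b ∈ G' ρ) :
    ∃ γs : Fin n → List (G A), (∀ i, ∀ b ∈ γs i, b ∈ ρ i) ∧
      ∀ b ∈ β, b ∈ G' (fun i => lset (γs i)) := by
  induction β with
  | nil => exact ⟨fun _ => [], by simp, by simp⟩
  | cons a β ih =>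
    obtain ⟨γs, hγ, hmem⟩ := ih (fun b hb => hβ b (List.mem_cons_of_mem _ hb))
    obtain ⟨δs, hδ, ha⟩ := (h ρ a).1 (hβ a List.mem_cons_self)
    have hsubγ : ∀ i, lset (γs i) ⊆ lset (γs i ++ δs i) := by
      intro i b hb; simp [lset] at *; tauto
    have hsubδ : ∀ i, lset (δs i) ⊆ lset (γs i ++ δs i) := by
      intro i b hb; simp [lset] at *; tauto
    refine ⟨fun i => γs i ++ δs i, ?_, ?_⟩
    · intro i b hb
      rcases List.mem_append.1 hb with h' | h'
      · exact hγ i b h'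
      · exact hδ i b h'
    · intro b hb
      rcases List.mem_cons.1 hb with rfl | h'
      · exact h.mono hsubδ ha
      · exact h.mono hsubγ (hmem b h')

lemma cont_ap {n : ℕ} {F G' : (Fin n → Set (G A)) → Set (G A)}
    (hF : Cont F) (hG : Cont G') : Cont (fun ρ => ap (F ρ) (G' ρ)) := by
  intro ρ x
  constructor
  · rintro ⟨β, hβF, hβG⟩
    obtain ⟨αs, hα, hxF⟩ := (hF ρ _).1 hβF
    obtain ⟨γs, hγ, hmem⟩ := approx_list hG ρ β hβG
    have hsubα : ∀ i, lset (αs i) ⊆ lset (αs i ++ γs i) := by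
      intro i b hb; simp [lset] at *; tauto
    have hsubγ : ∀ i, lset (γs i) ⊆ lset (αs i ++ γs i) := by
      intro i b hb; simp [lset] at *; tauto
    refine ⟨fun i => αs i ++ γs i, ?_, ?_⟩
    · intro i b hb
      rcases List.mem_append.1 hb with h' | h'
      · exact hα i b h'
      · exact hγ i b h'
    · exact ⟨β, hF.mono hsubα hxF, fun b hb => hG.mono hsubγ (hmem b hb)⟩
  · rintro ⟨αs, hα, β, hβF, hβG⟩
    have hle : ∀ i, lset (αs i) ⊆ ρ i := fun i b hb => hα i b hb
    exact ⟨β, hF.mono hle hβF, fun b hb => hG.mono hle (hβG b hb)⟩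

def lam (F : Set (G A) → Set (G A)) : Set (G A) :=
  {y | ∃ α x, y = G.arrow α x ∧ x ∈ F (lset α)}

lemma ap_lam {F : Set (G A) → Set (G A)}
    (h : ∀ X x, x ∈ F X ↔ ∃ α : List (G A), (∀ b ∈ α, b ∈ X) ∧ x ∈ F (lset α))
    (X : Set (G A)) : ap (lam F) X = F X := by
  ext x
  constructor
  · rintro ⟨α, ⟨α', x', heq, hx'⟩, hsub⟩
    injection heq with h1 h2
    subst h1; subst h2
    exact (h X x).2 ⟨α, hsub, hx'⟩
  · intro hx
    obtain ⟨α, hsub, hx'⟩ := (h X x).1 hx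
    exact ⟨α, ⟨α, x, rfl, hx'⟩, hsub⟩

lemma cont_one {n : ℕ} {F : (Fin (n + 1) → Set (G A)) → Set (G A)} (hF : Cont F)
    (ρ : Fin n → Set (G A)) :
    ∀ X x, x ∈ F (Fin.snoc ρ X) ↔ ∃ α : List (G A), (∀ b ∈ α, b ∈ X) ∧
      x ∈ F (Fin.snoc ρ (lset α)) := by
  intro X x
  constructor
  · intro hx
    obtain ⟨αs, hα, hx'⟩ := (hF _ x).1 hx
    refine ⟨αs (Fin.last n), ?_, ?_⟩
    · intro b hb; simpa using hα (Fin.last n) b hb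
    · refine hF.mono ?_ hx'
      intro i
      refine Fin.lastCases ?_ (fun j => ?_) i
      · intro b hb; simpa [lset] using hb
      · intro b hb
        have := hα j.castSucc b hb
        simpa [Fin.snoc_castSucc] using this
  · rintro ⟨α, hsub, hx⟩
    refine hF.mono ?_ hx
    intro i
    refine Fin.lastCases ?_ (fun j => ?_) i
    · intro b hb; simp [lset] at hb; simpa using hsub b hb
    · simp [Fin.snoc_castSucc]

lemma cont_lam {n : ℕ} {F : (Fin (n + 1) → Set (G A)) → Set (G A)} (hF : Cont F) :
    Cont (fun ρ => lam (fun Y => F (Fin.snoc ρ Y))) := by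
  intro ρ y
  constructor
  · rintro ⟨α, x, rfl, hx⟩
    obtain ⟨αs, hα, hx'⟩ := (hF _ x).1 hx
    refine ⟨fun i => αs i.castSucc, ?_, ?_⟩
    · intro i b hb
      have := hα i.castSucc b hb
      simpa [Fin.snoc_castSucc] using this
    · refine ⟨α, x, rfl, ?_⟩
      refine hF.mono ?_ hx'
      intro i
      refine Fin.lastCases ?_ (fun j => ?_) i
      · intro b hb; simpa using hα (Fin.last n) b hb
      · intro b hb; simpa [Fin.snoc_castSucc] using hb
  · rintro ⟨αs, hα, α, x, rfl, hx⟩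
    refine ⟨α, x, rfl, ?_⟩
    refine hF.mono ?_ hx
    intro i
    refine Fin.lastCases ?_ (fun j => ?_) i
    · simp
    · intro b hb
      simp only [Fin.snoc_castSucc] at hb ⊢
      exact hα j b hb

end Scratch

namespace Scratch

lemma cont_value {n : ℕ} {C : Type*} (ι : C → Set (G A)) (t : Term n C) :
    Cont (fun ρ => t.value ι ρ) := by
  induction t with
  | var i => exact cont_var i
  | const c => exact cont_const (ι c)
  | app t s iht ihs => exact cont_ap iht ihs

lemma exists_iterAp {n : ℕ} (F : (Fin n → Set (G A)) → Set (G A)) (hF : Cont F) :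
    ∃ M : Set (G A), ∀ X, iterAp M X = F X := by
  induction n with
  | zero =>
    refine ⟨F Fin.elim0, fun X => ?_⟩
    have hX : X = Fin.elim0 := funext fun i => i.elim0
    subst hX
    simp [iterAp]
  | succ n ih =>
    obtain ⟨M, hM⟩ := ih _ (cont_lam hF)
    refine ⟨M, fun X => ?_⟩
    have h1 : iterAp M X = ap (iterAp M (Fin.init X)) (X (Fin.last n)) := by
      rw [iterAp, List.ofFn_succ', List.concat_eq_append, List.foldl_append]
      rfl
    rw [h1, hM, ap_lam (cont_one hF (Fin.init X))]
    exact congrArg F (Fin.snoc_init_self X)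

end Scratch

/-- Comprehension theorem for the graph model: for every combinatory term `t`
built from `n` variables and constants (interpreted as fixed subsets of `G(A)`)
there is `M ⊆ G(A)` with `((M·X₁)·X₂)···Xₙ = t(X₁,…,Xₙ)` for all
`X₁, …, Xₙ ⊆ G(A)`. -/
theorem comprehension {A : Type u} [Nonempty A] {n : ℕ} {C : Type*}
    (ι : C → Set (G A)) (t : Term n C) :
    ∃ M : Set (G A), ∀ X : Fin n → Set (G A), iterAp M X = t.value ι X :=
  Scratch.exists_iterAp _ (Scratch.cont_value ι t)
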